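/- Let n ≥ 2 and let (λ(t), μ(t)) solve the ODE system dλ/dt = λ² + (n-1)λμ, dμ/dt = (n-1)μ² + λ², and set R = nλ + (n(n-1)/2)μ. Then dR/dt ≥ 2R²/(n+1). -/

import Mathlib

/-- The reaction ODE for the curvature operator of a rotationally invariant Ricci flow:
if `dλ/dt = λ² + (n-1)λμ`, `dμ/dt = (n-1)μ² + λ²`, and `R = nλ + (n(n-1)/2)μ`,
then `dR/dt ≥ 2R²/(n+1)`. -/
theorem stmt0 (n : ℕ) (hn : 2 ≤ n) (l m : ℝ → ℝ)
    (hl : Differentiable ℝ l) (hm : Differentiable ℝ m)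
    (hode1 : ∀ t, deriv l t = (l t) ^ 2 + ((n : ℝ) - 1) * (l t) * (m t))
    (hode2 : ∀ t, deriv m t = ((n : ℝ) - 1) * (m t) ^ 2 + (l t) ^ 2)
    (R : ℝ → ℝ)
    (hR : ∀ t, R t = (n : ℝ) * l t + ((n : ℝ) * ((n : ℝ) - 1) / 2) * m t) :
    ∀ t, 2 * (R t) ^ 2 / ((n : ℝ) + 1) ≤ deriv R t := by
  intro t
  have hRf : R = fun t => (n : ℝ) * l t + ((n : ℝ) * ((n : ℝ) - 1) / 2) * m t :=
    funext hR
  have hdR : deriv R t = (n : ℝ) * deriv l t + ((n : ℝ) * ((n : ℝ) - 1) / 2) * deriv m t := by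
    rw [hRf]
    rw [deriv_fun_add ((hl t).const_mul _) ((hm t).const_mul _),
      deriv_const_mul _ (hl t), deriv_const_mul _ (hm t)]
  have hn' : (2 : ℝ) ≤ (n : ℝ) := by exact_mod_cast hn
  have hpos : (0 : ℝ) < (n : ℝ) + 1 := by linarith
  rw [div_le_iff₀ hpos, hdR, hode1 t, hode2 t, hR t]
  nlinarith [sq_nonneg (l t - m t), sq_nonneg (l t + m t), sq_nonneg (l t), sq_nonneg (m t),
    mul_nonneg (mul_nonneg (by linarith : (0:ℝ) ≤ (n:ℝ) - 2) (by linarith : (0:ℝ) ≤ (n:ℝ))) (sq_nonneg (l t - m t)),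
    sq_nonneg ((n:ℝ) * (l t - m t))]
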